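/- Let W : ℝ → ℝ, let L1, L2, L12, L1m2 > 0 and g1, g2, g12, g1m2 > 0. Define W1(F) = W(‖F e1‖/L1) + W(‖F(e1−e2)‖/L1m2) and W2(F) = W(‖F e2‖/L2) + W(‖F(e1+e2)‖/L12), and the 2×2 matrices G1 = [[g1, g1−g1m2],[0, g1m2]] and G2 = [[g12, 0],[g12−g2, g2]]. Then G1 and G2 are invertible, and for every 2×2 real matrix F one has W_i(F) = W1(F) + W2(F) and W_g(F) = W1(F·G1⁻¹) + W2(F·G2⁻¹). (Third choice of energy-deformation decomposition for the homogeneously recombined lattice (ℤ², {e1, e2, e1±e2}).) -/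

import Mathlib

open Matrix

noncomputable section

/-- The basis vector `e₁ = (1,0)` of `ℝ²` with the Euclidean norm. -/
def e1 : EuclideanSpace ℝ (Fin 2) := EuclideanSpace.single 0 1

/-- The basis vector `e₂ = (0,1)` of `ℝ²` with the Euclidean norm. -/
def e2 : EuclideanSpace ℝ (Fin 2) := EuclideanSpace.single 1 1

/-- Initial Cauchy–Born continuum energy density of the lattice `(ℤ², {e₁, e₂, e₁±e₂})`. -/
def Wi (W : ℝ → ℝ) (L1 L2 L12 L1m2 : ℝ) (F : Matrix (Fin 2) (Fin 2) ℝ) : ℝ :=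
  W (‖toEuclideanLin F e1‖ / L1) + W (‖toEuclideanLin F e2‖ / L2) +
    W (‖toEuclideanLin F (e1 + e2)‖ / L12) + W (‖toEuclideanLin F (e1 - e2)‖ / L1m2)

/-- Grown (homogeneously recombined) Cauchy–Born continuum energy density. -/
def Wg (W : ℝ → ℝ) (L1 L2 L12 L1m2 g1 g2 g12 g1m2 : ℝ) (F : Matrix (Fin 2) (Fin 2) ℝ) : ℝ :=
  W (‖toEuclideanLin F e1‖ / (L1 * g1)) + W (‖toEuclideanLin F e2‖ / (L2 * g2)) +
    W (‖toEuclideanLin F (e1 + e2)‖ / (L12 * g12)) +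
    W (‖toEuclideanLin F (e1 - e2)‖ / (L1m2 * g1m2))

lemma aux_mulinv (F G : Matrix (Fin 2) (Fin 2) ℝ) (hG : G.det ≠ 0) (g : ℝ)
    (v : Fin 2 → ℝ) (h : G *ᵥ (g⁻¹ • v) = v) :
    toEuclideanLin (F * G⁻¹) ((WithLp.equiv 2 (Fin 2 → ℝ)).symm v)
      = g⁻¹ • toEuclideanLin F ((WithLp.equiv 2 (Fin 2 → ℝ)).symm v) := by
  have h2 : G⁻¹ *ᵥ v = g⁻¹ • v := by
    conv_lhs => rw [← h, Matrix.mulVec_mulVec,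
      Matrix.nonsing_inv_mul _ (isUnit_iff_ne_zero.2 hG), Matrix.one_mulVec]
  rw [WithLp.equiv_symm_apply, toEuclideanLin_apply_piLp_toLp, toEuclideanLin_apply_piLp_toLp,
    ← Matrix.mulVec_mulVec, h2, Matrix.mulVec_smul, WithLp.toLp_smul]

lemma aux_norm (g L : ℝ) (hg : 0 < g)
    (x y : EuclideanSpace ℝ (Fin 2)) (h : x = g⁻¹ • y) :
    ‖x‖ / L = ‖y‖ / (L * g) := by
  rw [h, norm_smul, Real.norm_eq_abs, abs_of_pos (inv_pos.2 hg),
    inv_mul_eq_div, div_div, mul_comm g L]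

/-- Energy-deformation decomposition for the homogeneously recombined lattice
`(ℤ², {e₁, e₂, e₁±e₂})`, third choice of decomposition. -/
theorem energy_deformation_decomposition_third_choice
    (W : ℝ → ℝ) (L1 L2 L12 L1m2 g1 g2 g12 g1m2 : ℝ)
    (hL1 : 0 < L1) (hL2 : 0 < L2) (hL12 : 0 < L12) (hL1m2 : 0 < L1m2)
    (hg1 : 0 < g1) (hg2 : 0 < g2) (hg12 : 0 < g12) (hg1m2 : 0 < g1m2) :
    let W1 : Matrix (Fin 2) (Fin 2) ℝ → ℝ := fun F =>
      W (‖toEuclideanLin F e1‖ / L1) + W (‖toEuclideanLin F (e1 - e2)‖ / L1m2)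
    let W2 : Matrix (Fin 2) (Fin 2) ℝ → ℝ := fun F =>
      W (‖toEuclideanLin F e2‖ / L2) + W (‖toEuclideanLin F (e1 + e2)‖ / L12)
    let G1 : Matrix (Fin 2) (Fin 2) ℝ := !![g1, g1 - g1m2; 0, g1m2]
    let G2 : Matrix (Fin 2) (Fin 2) ℝ := !![g12, 0; g12 - g2, g2]
    IsUnit G1 ∧ IsUnit G2 ∧
      ∀ F : Matrix (Fin 2) (Fin 2) ℝ,
        Wi W L1 L2 L12 L1m2 F = W1 F + W2 F ∧
        Wg W L1 L2 L12 L1m2 g1 g2 g12 g1m2 F = W1 (F * G1⁻¹) + W2 (F * G2⁻¹) := by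
  intro W1 W2 G1 G2
  have hd1 : G1.det ≠ 0 := by
    simp only [G1, Matrix.det_fin_two_of]
    nlinarith [mul_pos hg1 hg1m2]
  have hd2 : G2.det ≠ 0 := by
    simp only [G2, Matrix.det_fin_two_of]
    nlinarith [mul_pos hg12 hg2]
  have he1 : e1 = (WithLp.equiv 2 (Fin 2 → ℝ)).symm (Pi.single 0 1) := rfl
  have he2 : e2 = (WithLp.equiv 2 (Fin 2 → ℝ)).symm (Pi.single 1 1) := rfl
  have hadd : e1 + e2 = (WithLp.equiv 2 (Fin 2 → ℝ)).symm
      ((Pi.single 0 1 : Fin 2 → ℝ) + Pi.single 1 1) := by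
    rw [WithLp.equiv_symm_apply, WithLp.toLp_add]; rfl
  have hsub : e1 - e2 = (WithLp.equiv 2 (Fin 2 → ℝ)).symm
      ((Pi.single 0 1 : Fin 2 → ℝ) - Pi.single 1 1) := by
    rw [WithLp.equiv_symm_apply, WithLp.toLp_sub]; rfl
  have hG1e1 : G1 *ᵥ (g1⁻¹ • (Pi.single 0 1 : Fin 2 → ℝ)) = Pi.single 0 1 := by
    funext i
    fin_cases i <;>
      simp [G1, Matrix.mulVec, dotProduct, Fin.sum_univ_two, hg1.ne']
  have hG1sub : G1 *ᵥ (g1m2⁻¹ • ((Pi.single 0 1 : Fin 2 → ℝ) - Pi.single 1 1))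
      = (Pi.single 0 1 : Fin 2 → ℝ) - Pi.single 1 1 := by
    funext i
    fin_cases i <;>
      · simp [G1, Matrix.mulVec, dotProduct, Fin.sum_univ_two]
        try field_simp
        try ring
  have hG2e2 : G2 *ᵥ (g2⁻¹ • (Pi.single 1 1 : Fin 2 → ℝ)) = Pi.single 1 1 := by
    funext i
    fin_cases i <;>
      simp [G2, Matrix.mulVec, dotProduct, Fin.sum_univ_two, hg2.ne']
  have hG2add : G2 *ᵥ (g12⁻¹ • ((Pi.single 0 1 : Fin 2 → ℝ) + Pi.single 1 1))
      = (Pi.single 0 1 : Fin 2 → ℝ) + Pi.single 1 1 := by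
    funext i
    fin_cases i <;>
      · simp [G2, Matrix.mulVec, dotProduct, Fin.sum_univ_two]
        try field_simp
        try ring
  refine ⟨(Matrix.isUnit_iff_isUnit_det _).2 (isUnit_iff_ne_zero.2 hd1),
    (Matrix.isUnit_iff_isUnit_det _).2 (isUnit_iff_ne_zero.2 hd2), fun F => ⟨by
      simp only [Wi, W1, W2]; ring, ?_⟩⟩
  have n1 : ‖toEuclideanLin (F * G1⁻¹) e1‖ / L1 = ‖toEuclideanLin F e1‖ / (L1 * g1) := by
    refine aux_norm g1 L1 hg1 _ _ ?_
    rw [he1]; exact aux_mulinv F G1 hd1 g1 _ hG1e1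
  have n2 : ‖toEuclideanLin (F * G1⁻¹) (e1 - e2)‖ / L1m2
      = ‖toEuclideanLin F (e1 - e2)‖ / (L1m2 * g1m2) := by
    refine aux_norm g1m2 L1m2 hg1m2 _ _ ?_
    rw [hsub]; exact aux_mulinv F G1 hd1 g1m2 _ hG1sub
  have n3 : ‖toEuclideanLin (F * G2⁻¹) e2‖ / L2 = ‖toEuclideanLin F e2‖ / (L2 * g2) := by
    refine aux_norm g2 L2 hg2 _ _ ?_
    rw [he2]; exact aux_mulinv F G2 hd2 g2 _ hG2e2
  have n4 : ‖toEuclideanLin (F * G2⁻¹) (e1 + e2)‖ / L12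
      = ‖toEuclideanLin F (e1 + e2)‖ / (L12 * g12) := by
    refine aux_norm g12 L12 hg12 _ _ ?_
    rw [hadd]; exact aux_mulinv F G2 hd2 g12 _ hG2add
  simp only [Wg, W1, W2, n1, n2, n3, n4]
  ring


end
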